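/- Let a ∈ C([0,1]) be strongly degenerate with degeneracy point x₀ ∈ (0,1). Let u ∈ H¹(0,1) be such that u' is locally absolutely continuous on [0,1] \ {x₀}, √a·u'' ∈ L²(0,1) and a·u'' ∈ H²(0,1), and let v ∈ H¹(0,1) be such that v' is locally absolutely continuous on [0,1] \ {x₀} and √a·v'' ∈ L²(0,1). Then ∫₀¹ (a u'')'' v dx = (a u'')'(1) v(1) − (a u'')'(0) v(0) − (a u'')(1) v'(1) + (a u'')(0) v'(0) + ∫₀¹ a u'' v'' dx. -/

import Mathlib

open MeasureTheory Set Filter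

/-- `f` is absolutely continuous on `[c,d]` with (a.e.) derivative `g`,
expressed via the fundamental theorem of calculus. -/
def ACOn (c d : ℝ) (f g : ℝ → ℝ) : Prop :=
  MeasureTheory.IntegrableOn g (Set.Icc c d) ∧
    ∀ x ∈ Set.Icc c d, f x = f c + ∫ t in c..x, g t

/-- `f` is locally absolutely continuous on `[0,1] \ {x₀}` with derivative `g`. -/
def LocACOn (x₀ : ℝ) (f g : ℝ → ℝ) : Prop :=
  ∀ c d : ℝ, 0 ≤ c → d ≤ 1 → c ≤ d → x₀ ∉ Set.Icc c d → ACOn c d f g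

/-- `a` is weakly degenerate with degeneracy point `x₀`. -/
def WeaklyDeg (a : ℝ → ℝ) (x₀ : ℝ) : Prop :=
  ContinuousOn a (Set.Icc 0 1) ∧ x₀ ∈ Set.Icc (0:ℝ) 1 ∧ a x₀ = 0 ∧
    (∀ x ∈ Set.Icc (0:ℝ) 1, x ≠ x₀ → 0 < a x) ∧
    MeasureTheory.IntegrableOn (fun x => 1 / a x) (Set.Ioo 0 1)

/-- `a` is strongly degenerate with degeneracy point `x₀`. -/
def StronglyDeg (a : ℝ → ℝ) (x₀ : ℝ) : Prop :=
  ContinuousOn a (Set.Icc 0 1) ∧ x₀ ∈ Set.Icc (0:ℝ) 1 ∧ a x₀ = 0 ∧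
    (∀ x ∈ Set.Icc (0:ℝ) 1, x ≠ x₀ → 0 < a x) ∧
    ¬ MeasureTheory.IntegrableOn (fun x => 1 / a x) (Set.Ioo 0 1)

/-- Hypothesis (H): there is `K ∈ [1,2)` such that `x ↦ |x-x₀|^K / a x` is
non-increasing on `[0,x₀)` and non-decreasing on `(x₀,1]`. -/
def HypH (a : ℝ → ℝ) (x₀ : ℝ) : Prop :=
  ∃ K : ℝ, 1 ≤ K ∧ K < 2 ∧
    AntitoneOn (fun x => |x - x₀| ^ K / a x) (Set.Ico 0 x₀) ∧
    MonotoneOn (fun x => |x - x₀| ^ K / a x) (Set.Ioc x₀ 1)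

/-- The squared `L²(0,1)` norm. -/
noncomputable def sqL2 (f : ℝ → ℝ) : ℝ := ∫ x in Set.Ioo (0:ℝ) 1, (f x) ^ 2

open Topology

section Helpers


lemma ibp_core {a b : ℝ} {f g : ℝ → ℝ} (hf : IntegrableOn f (Ioc a b)) (hg : IntegrableOn g (Ioc a b)) :
    (∫ x in Ioc a b, f x * ∫ t in Ioc a x, g t) +
      (∫ x in Ioc a b, (∫ t in Ioc a x, f t) * g x) =
      (∫ t in Ioc a b, f t) * (∫ t in Ioc a b, g t) := by
  set μ := volume.restrict (Ioc a b) with hμ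
  have hfg : Integrable (fun p : ℝ × ℝ => f p.1 * g p.2) (μ.prod μ) := Integrable.mul_prod hf hg
  have hs : MeasurableSet {p : ℝ × ℝ | p.2 ≤ p.1} := measurableSet_le measurable_snd measurable_fst
  have hs' : MeasurableSet {p : ℝ × ℝ | p.1 ≤ p.2} := measurableSet_le measurable_fst measurable_snd
  have hD : MeasurableSet {p : ℝ × ℝ | p.1 = p.2} :=
    measurableSet_eq_fun measurable_fst measurable_snd
  have hDnull : (μ.prod μ) {p : ℝ × ℝ | p.1 = p.2} = 0 := by
    rw [Measure.prod_apply hD]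
    have : ∀ x : ℝ, μ (Prod.mk x ⁻¹' {p : ℝ × ℝ | p.1 = p.2}) = 0 := by
      intro x
      have : (Prod.mk x ⁻¹' {p : ℝ × ℝ | p.1 = p.2}) = {x} := by
        ext y; simp [eq_comm]
      rw [this, hμ, Measure.restrict_apply (measurableSet_singleton x)]
      exact measure_mono_null inter_subset_left (measure_singleton x)
    simp [this]
  have hindS := hfg.indicator hs
  have hindS' := hfg.indicator hs'
  have hindD := hfg.indicator hD
  have hA : (∫ p, ({p : ℝ × ℝ | p.2 ≤ p.1}).indicator (fun p => f p.1 * g p.2) p ∂(μ.prod μ))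
      = ∫ x in Ioc a b, f x * ∫ t in Ioc a x, g t := by
    rw [integral_prod _ hindS]
    apply setIntegral_congr_fun measurableSet_Ioc
    intro x hx
    have h1 : (fun y => ({p : ℝ × ℝ | p.2 ≤ p.1}).indicator (fun p => f p.1 * g p.2) (x, y))
        = (Iic x).indicator (fun y => f x * g y) := by
      ext y
      by_cases h : y ≤ x <;> simp [Set.indicator_apply, h]
    show (∫ y, ({p : ℝ × ℝ | p.2 ≤ p.1}).indicator (fun p => f p.1 * g p.2) (x, y) ∂μ) = _
    rw [show (fun y => ({p : ℝ × ℝ | p.2 ≤ p.1}).indicator (fun p => f p.1 * g p.2) (x, y)) = (Iic x).indicator (fun y => f x * g y) from h1,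
      integral_indicator measurableSet_Iic, hμ, Measure.restrict_restrict measurableSet_Iic]
    have h2 : Iic x ∩ Ioc a b = Ioc a x := by
      rw [inter_comm, Ioc_inter_Iic, min_eq_right hx.2]
    rw [h2, integral_const_mul]
  have hB : (∫ p, ({p : ℝ × ℝ | p.1 ≤ p.2}).indicator (fun p => f p.1 * g p.2) p ∂(μ.prod μ))
      = ∫ x in Ioc a b, (∫ t in Ioc a x, f t) * g x := by
    rw [integral_prod_symm _ hindS']
    apply setIntegral_congr_fun measurableSet_Ioc
    intro y hy
    have h1 : (fun x => ({p : ℝ × ℝ | p.1 ≤ p.2}).indicator (fun p => f p.1 * g p.2) (x, y))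
        = (Iic y).indicator (fun x => f x * g y) := by
      ext x
      by_cases h : x ≤ y <;> simp [Set.indicator_apply, h]
    show (∫ x, ({p : ℝ × ℝ | p.1 ≤ p.2}).indicator (fun p => f p.1 * g p.2) (x, y) ∂μ) = _
    rw [show (fun x => ({p : ℝ × ℝ | p.1 ≤ p.2}).indicator (fun p => f p.1 * g p.2) (x, y)) = (Iic y).indicator (fun x => f x * g y) from h1,
      integral_indicator measurableSet_Iic, hμ, Measure.restrict_restrict measurableSet_Iic]
    have h2 : Iic y ∩ Ioc a b = Ioc a y := by
      rw [inter_comm, Ioc_inter_Iic, min_eq_right hy.2]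
    rw [h2, integral_mul_const]
  have hptwise : (fun p : ℝ × ℝ => ({p : ℝ × ℝ | p.2 ≤ p.1}).indicator (fun p => f p.1 * g p.2) p
        + ({p : ℝ × ℝ | p.1 ≤ p.2}).indicator (fun p => f p.1 * g p.2) p)
      = fun p : ℝ × ℝ => (f p.1 * g p.2)
        + ({p : ℝ × ℝ | p.1 = p.2}).indicator (fun p => f p.1 * g p.2) p := by
    funext p
    rcases lt_trichotomy p.1 p.2 with h | h | h
    · simp [Set.indicator_apply, h.le, not_le.mpr h, h.ne]
    · simp [Set.indicator_apply, le_of_eq h, le_of_eq h.symm, h]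
    · simp [Set.indicator_apply, h.le, not_le.mpr h, h.ne']
  have hsum : (∫ p, ({p : ℝ × ℝ | p.2 ≤ p.1}).indicator (fun p => f p.1 * g p.2) p ∂(μ.prod μ))
      + (∫ p, ({p : ℝ × ℝ | p.1 ≤ p.2}).indicator (fun p => f p.1 * g p.2) p ∂(μ.prod μ))
      = (∫ t in Ioc a b, f t) * (∫ t in Ioc a b, g t) := by
    rw [← integral_add hindS hindS']
    calc (∫ p, (({p : ℝ × ℝ | p.2 ≤ p.1}).indicator (fun p => f p.1 * g p.2) p
          + ({p : ℝ × ℝ | p.1 ≤ p.2}).indicator (fun p => f p.1 * g p.2) p) ∂(μ.prod μ))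
        = (∫ p, ((f p.1 * g p.2)
          + ({p : ℝ × ℝ | p.1 = p.2}).indicator (fun p => f p.1 * g p.2) p) ∂(μ.prod μ)) := by
          rw [show _ = _ from hptwise]
      _ = (∫ p, f p.1 * g p.2 ∂(μ.prod μ))
          + (∫ p, ({p : ℝ × ℝ | p.1 = p.2}).indicator (fun p => f p.1 * g p.2) p ∂(μ.prod μ)) :=
          integral_add hfg hindD
      _ = (∫ t in Ioc a b, f t) * (∫ t in Ioc a b, g t) := by
          rw [integral_indicator hD, Measure.restrict_eq_zero.mpr hDnull, integral_zero_measure,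
            add_zero, integral_prod_mul]
  rw [← hA, ← hB, hsum]

lemma ibp {a b : ℝ} (hab : a ≤ b) {f g F G : ℝ → ℝ}
    (hf : IntegrableOn f (Icc a b)) (hg : IntegrableOn g (Icc a b))
    (hF : ∀ x ∈ Icc a b, F x = F a + ∫ t in a..x, f t)
    (hG : ∀ x ∈ Icc a b, G x = G a + ∫ t in a..x, g t) :
    (∫ x in Ioc a b, f x * G x) + (∫ x in Ioc a b, F x * g x) = F b * G b - F a * G a := by
  have hf' : IntegrableOn f (Ioc a b) := hf.mono Ioc_subset_Icc_self le_rfl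
  have hg' : IntegrableOn g (Ioc a b) := hg.mono Ioc_subset_Icc_self le_rfl
  set Sf : ℝ → ℝ := fun x => ∫ t in Ioc a x, f t with hSf
  set Sg : ℝ → ℝ := fun x => ∫ t in Ioc a x, g t with hSg
  have hGrep : ∀ x ∈ Icc a b, G x = G a + Sg x := by
    intro x hx
    rw [hG x hx, intervalIntegral.integral_of_le hx.1]
  have hFrep : ∀ x ∈ Icc a b, F x = F a + Sf x := by
    intro x hx
    rw [hF x hx, intervalIntegral.integral_of_le hx.1]
  have contSf : ContinuousOn Sf (Icc a b) := intervalIntegral.continuousOn_primitive hf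
  have contSg : ContinuousOn Sg (Icc a b) := intervalIntegral.continuousOn_primitive hg
  obtain ⟨Mf, hMf⟩ : ∃ M, ∀ x ∈ Icc a b, ‖Sf x‖ ≤ M :=
    isCompact_Icc.exists_bound_of_continuousOn contSf
  obtain ⟨Mg, hMg⟩ : ∃ M, ∀ x ∈ Icc a b, ‖Sg x‖ ≤ M :=
    isCompact_Icc.exists_bound_of_continuousOn contSg
  have hSgm : AEStronglyMeasurable Sg (volume.restrict (Ioc a b)) :=
    (contSg.mono Ioc_subset_Icc_self).aestronglyMeasurable measurableSet_Ioc
  have hSfm : AEStronglyMeasurable Sf (volume.restrict (Ioc a b)) :=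
    (contSf.mono Ioc_subset_Icc_self).aestronglyMeasurable measurableSet_Ioc
  have hIfSg : IntegrableOn (fun x => f x * Sg x) (Ioc a b) := by
    have := Integrable.bdd_mul (c := Mg) hf' hSgm
      (ae_restrict_of_forall_mem measurableSet_Ioc fun x hx => hMg x (Ioc_subset_Icc_self hx))
    simpa [mul_comm, IntegrableOn] using this
  have hISfg : IntegrableOn (fun x => Sf x * g x) (Ioc a b) :=
    Integrable.bdd_mul (c := Mf) hg' hSfm
      (ae_restrict_of_forall_mem measurableSet_Ioc fun x hx => hMf x (Ioc_subset_Icc_self hx))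
  have e1 : (∫ x in Ioc a b, f x * G x)
      = (∫ x in Ioc a b, f x) * G a + ∫ x in Ioc a b, f x * Sg x := by
    rw [show (∫ x in Ioc a b, f x * G x) = ∫ x in Ioc a b, (f x * G a + f x * Sg x) from
      setIntegral_congr_fun measurableSet_Ioc fun x hx => by
        rw [hGrep x (Ioc_subset_Icc_self hx)]; ring]
    rw [integral_add (hf'.mul_const (G a)) hIfSg, integral_mul_const]
  have e2 : (∫ x in Ioc a b, F x * g x)
      = F a * (∫ x in Ioc a b, g x) + ∫ x in Ioc a b, Sf x * g x := by
    rw [show (∫ x in Ioc a b, F x * g x) = ∫ x in Ioc a b, (F a * g x + Sf x * g x) from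
      setIntegral_congr_fun measurableSet_Ioc fun x hx => by
        rw [hFrep x (Ioc_subset_Icc_self hx)]; ring]
    rw [integral_add (hg'.const_mul (F a)) hISfg, integral_const_mul]
  have hcore := ibp_core hf' hg'
  have hFb : F b = F a + Sf b := hFrep b (right_mem_Icc.mpr hab)
  have hGb : G b = G a + Sg b := hGrep b (right_mem_Icc.mpr hab)
  rw [e1, e2, hFb, hGb]
  have : (∫ x in Ioc a b, f x * Sg x) + (∫ x in Ioc a b, Sf x * g x) = Sf b * Sg b := hcore
  nlinarith [this]

lemma ACOn.continuousOn' {c d : ℝ} {f g : ℝ → ℝ} (h : ACOn c d f g) :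
    ContinuousOn f (Icc c d) := by
  have h1 : ContinuousOn (fun x => f c + ∫ t in Ioc c x, g t) (Icc c d) :=
    continuousOn_const.add (intervalIntegral.continuousOn_primitive h.1)
  refine h1.congr fun x hx => ?_
  rw [h.2 x hx, intervalIntegral.integral_of_le hx.1]

lemma locACOn_aesm {x₀ : ℝ} (hx₀ : x₀ ∈ Ioo (0:ℝ) 1) {f g : ℝ → ℝ} (h : LocACOn x₀ f g) :
    AEStronglyMeasurable g (volume.restrict (Ioo 0 1)) := by
  obtain ⟨hx₀0, hx₀1⟩ := hx₀
  set S : ℕ → Set ℝ := fun n =>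
    Icc 0 (x₀ - x₀ / (n + 1)) ∪ Icc (x₀ + (1 - x₀) / (n + 1)) 1 with hS
  have hmeas : ∀ n, AEStronglyMeasurable g (volume.restrict (S n)) := by
    intro n
    have hn : (0:ℝ) < n + 1 := by positivity
    have h1 : AEStronglyMeasurable g (volume.restrict (Icc 0 (x₀ - x₀ / (n + 1)))) := by
      have hle : x₀ / (n + 1) ≤ x₀ := by
        rw [div_le_iff₀ hn]; nlinarith
      have := (h 0 (x₀ - x₀ / (n + 1)) le_rfl (by nlinarith [div_pos hx₀0 hn]) (by linarith)
        (fun hc => by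
          have := hc.2
          nlinarith [div_pos hx₀0 hn])).1
      exact this.aestronglyMeasurable
    have h2 : AEStronglyMeasurable g (volume.restrict (Icc (x₀ + (1 - x₀) / (n + 1)) 1)) := by
      have hle : (1 - x₀) / (n + 1) ≤ 1 - x₀ := by
        rw [div_le_iff₀ hn]; nlinarith
      have := (h (x₀ + (1 - x₀) / (n + 1)) 1 (by nlinarith [div_pos (by linarith : (0:ℝ) < 1 - x₀) hn])
        le_rfl (by linarith)
        (fun hc => by
          have := hc.1
          nlinarith [div_pos (by linarith : (0:ℝ) < 1 - x₀) hn])).1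
      exact this.aestronglyMeasurable
    exact aestronglyMeasurable_union_iff.mpr ⟨h1, h2⟩
  have hU : AEStronglyMeasurable g (volume.restrict (⋃ n, S n)) :=
    aestronglyMeasurable_iUnion_iff.mpr hmeas
  have hcover : Ioo (0:ℝ) 1 ⊆ {x₀} ∪ ⋃ n, S n := by
    intro x hx
    by_cases hxx : x = x₀
    · exact Or.inl (by simp [hxx])
    right
    rcases lt_or_gt_of_ne hxx with hlt | hgt
    · obtain ⟨n, hn⟩ := exists_nat_gt (x₀ / (x₀ - x))
      refine mem_iUnion.mpr ⟨n, Or.inl ⟨hx.1.le, ?_⟩⟩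
      have hpos : (0:ℝ) < x₀ - x := by linarith
      have hn1 : (0:ℝ) < n + 1 := by positivity
      have : x₀ / (n + 1) ≤ x₀ - x := by
        rw [div_le_iff₀ hn1]
        have : x₀ / (x₀ - x) < n + 1 := by linarith
        rw [div_lt_iff₀ hpos] at this
        nlinarith
      linarith
    · obtain ⟨n, hn⟩ := exists_nat_gt ((1 - x₀) / (x - x₀))
      refine mem_iUnion.mpr ⟨n, Or.inr ⟨?_, hx.2.le⟩⟩
      have hpos : (0:ℝ) < x - x₀ := by linarith
      have hn1 : (0:ℝ) < n + 1 := by positivity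
      have : (1 - x₀) / (n + 1) ≤ x - x₀ := by
        rw [div_le_iff₀ hn1]
        have : (1 - x₀) / (x - x₀) < n + 1 := by linarith
        rw [div_lt_iff₀ hpos] at this
        nlinarith
      linarith
  refine hU.mono_measure ?_
  calc volume.restrict (Ioo 0 1) ≤ volume.restrict ({x₀} ∪ ⋃ n, S n) :=
        Measure.restrict_mono hcover le_rfl
    _ ≤ volume.restrict {x₀} + volume.restrict (⋃ n, S n) := Measure.restrict_union_le _ _
    _ = volume.restrict (⋃ n, S n) := by
        rw [Measure.restrict_eq_zero.mpr (measure_singleton x₀), zero_add]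

lemma phi_zero {a u'' : ℝ → ℝ} {x₀ : ℝ} (hx₀ : x₀ ∈ Ioo (0:ℝ) 1) (ha : StronglyDeg a x₀)
    (hφcont : ContinuousOn (fun x => a x * u'' x) (Icc 0 1))
    (hsau : IntegrableOn (fun x => a x * (u'' x) ^ 2) (Ioo 0 1)) :
    a x₀ * u'' x₀ = 0 := by
  set φ : ℝ → ℝ := fun x => a x * u'' x with hφ
  by_contra hne
  obtain ⟨hx₀0, hx₀1⟩ := hx₀
  have hx₀' : x₀ ∈ Icc (0:ℝ) 1 := ⟨hx₀0.le, hx₀1.le⟩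
  set ε := |φ x₀| / 2 with hε
  have hεpos : 0 < ε := by positivity
  have hopen : IsOpen {y : ℝ | ε < |y|} := isOpen_lt continuous_const continuous_abs
  have hmem : φ x₀ ∈ {y : ℝ | ε < |y|} := by
    simp only [mem_setOf_eq, hε]
    have : 0 < |φ x₀| := abs_pos.mpr hne
    linarith
  have hev : {x | φ x ∈ {y : ℝ | ε < |y|}} ∈ 𝓝[Icc (0:ℝ) 1] x₀ :=
    hφcont x₀ hx₀' (hopen.mem_nhds hmem)
  rw [Metric.mem_nhdsWithin_iff] at hev
  obtain ⟨δ, hδpos, hδ⟩ := hev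
  set l := max 0 (x₀ - δ) with hl
  set r := min 1 (x₀ + δ) with hr
  have hlx : l < x₀ := by
    rw [hl, max_lt_iff]; exact ⟨hx₀0, by linarith⟩
  have hxr : x₀ < r := by
    rw [hr, lt_min_iff]; exact ⟨hx₀1, by linarith⟩
  have hJsub : Ioo l r ⊆ Ioo (0:ℝ) 1 :=
    Ioo_subset_Ioo (le_max_left _ _) (min_le_left _ _)
  have hJball : ∀ x ∈ Ioo l r, ε < |φ x| := by
    intro x hx
    apply hδ
    constructor
    · rw [Metric.mem_ball, Real.dist_eq, abs_sub_lt_iff]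
      constructor
      · have := hx.2; have : x < x₀ + δ := lt_of_lt_of_le this (min_le_right _ _); linarith
      · have := hx.1; have : x₀ - δ < x := lt_of_le_of_lt (le_max_right _ _) this; linarith
    · exact Ioo_subset_Icc_self (hJsub hx)
  -- 1/a is integrable on Ioo l r
  have hint1 : IntegrableOn (fun x => 1 / a x) (Ioo l r) := by
    apply Integrable.mono' (g := fun x => (1 / ε ^ 2) * (a x * (u'' x) ^ 2))
    · exact ((hsau.mono hJsub le_rfl).const_mul _)
    · have haem : AEMeasurable a (volume.restrict (Ioo l r)) :=
        ((ha.1.mono (hJsub.trans Ioo_subset_Icc_self)).aestronglyMeasurable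
          measurableSet_Ioo).aemeasurable
      have : AEMeasurable (fun x => (a x)⁻¹) (volume.restrict (Ioo l r)) := haem.inv
      simpa [one_div] using this.aestronglyMeasurable
    · have hae : ∀ᵐ x ∂(volume.restrict (Ioo l r)), x ≠ x₀ := by
        refine ae_restrict_of_ae ?_
        have hset : {x : ℝ | ¬ x ≠ x₀} = {x₀} := by ext y; simp [not_not]
        rw [ae_iff, hset]
        exact measure_singleton x₀
      filter_upwards [ae_restrict_mem measurableSet_Ioo, hae] with x hxJ hxne
      have hax : 0 < a x := ha.2.2.2.1 x (Ioo_subset_Icc_self (hJsub hxJ)) hxne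
      have hφx : ε < |φ x| := hJball x hxJ
      have h2 : ε ^ 2 < (a x * u'' x) ^ 2 := by
        rw [show (a x * u'' x) ^ 2 = |φ x| ^ 2 from (sq_abs (φ x)).symm]
        exact pow_lt_pow_left₀ hφx hεpos.le (by norm_num)
      rw [Real.norm_eq_abs, abs_of_pos (by positivity : (0:ℝ) < 1 / a x), div_le_iff₀ hax]
      have he : 1 / ε ^ 2 * (a x * u'' x ^ 2) * a x = (a x * u'' x) ^ 2 / ε ^ 2 := by ring
      rw [he, le_div_iff₀ (by positivity), one_mul]
      exact h2.le
  -- 1/a integrable on side pieces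
  have hside1 : IntegrableOn (fun x => 1 / a x) (Icc 0 l) := by
    apply ContinuousOn.integrableOn_Icc
    apply ContinuousOn.div continuousOn_const
    · exact ha.1.mono (Icc_subset_Icc le_rfl (by linarith [hx₀1]))
    · intro x hx
      exact (ha.2.2.2.1 x ⟨hx.1, by linarith [hx.2, hlx, hx₀1]⟩ (by linarith [hx.2, hlx])).ne'
  have hside2 : IntegrableOn (fun x => 1 / a x) (Icc r 1) := by
    apply ContinuousOn.integrableOn_Icc
    apply ContinuousOn.div continuousOn_const
    · exact ha.1.mono (Icc_subset_Icc (by linarith [hx₀0]) le_rfl)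
    · intro x hx
      exact (ha.2.2.2.1 x ⟨by linarith [hx.1, hxr, hx₀0], hx.2⟩ (by linarith [hx.1, hxr])).ne'
  have : IntegrableOn (fun x => 1 / a x) (Ioo 0 1) := by
    apply IntegrableOn.mono_set ((hside1.union hint1).union hside2)
    intro x hx
    by_cases h1 : x ≤ l
    · exact Or.inl (Or.inl ⟨hx.1.le, h1⟩)
    by_cases h2 : x < r
    · exact Or.inl (Or.inr ⟨not_le.mp h1, h2⟩)
    · exact Or.inr ⟨not_lt.mp h2, hx.2.le⟩
  exact ha.2.2.2.2 this

lemma phi_bound {φ w₁ : ℝ → ℝ} {x₀ : ℝ} (hx₀ : x₀ ∈ Icc (0:ℝ) 1)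
    (hw₁cont : ContinuousOn w₁ (Icc 0 1))
    (hrep : ∀ x ∈ Icc (0:ℝ) 1, φ x = φ 0 + ∫ t in (0:ℝ)..x, w₁ t)
    (hzero : φ x₀ = 0) :
    ∃ C : ℝ, 1 ≤ C ∧ ∀ x ∈ Icc (0:ℝ) 1, |φ x| ≤ C * |x - x₀| := by
  obtain ⟨C₀, hC₀⟩ := isCompact_Icc.exists_bound_of_continuousOn hw₁cont
  refine ⟨max C₀ 1, le_max_right _ _, fun x hx => ?_⟩
  have hxint : IntervalIntegrable w₁ volume 0 x := by
    apply ContinuousOn.intervalIntegrable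
    apply hw₁cont.mono
    rw [uIcc_of_le hx.1]
    exact Icc_subset_Icc le_rfl hx.2
  have hx₀int : IntervalIntegrable w₁ volume 0 x₀ := by
    apply ContinuousOn.intervalIntegrable
    apply hw₁cont.mono
    rw [uIcc_of_le hx₀.1]
    exact Icc_subset_Icc le_rfl hx₀.2
  have hrepx := hrep x hx
  have hrepx₀ := hrep x₀ hx₀
  have hφeq : φ x = ∫ t in x₀..x, w₁ t := by
    rw [← intervalIntegral.integral_interval_sub_left hxint hx₀int]
    rw [hrepx]
    rw [hzero] at hrepx₀
    linarith [hrepx₀]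
  rw [hφeq]
  have := intervalIntegral.norm_integral_le_of_norm_le_const (C := max C₀ 1)
    (f := w₁) (a := x₀) (b := x) ?_
  · simpa [Real.norm_eq_abs] using this
  · intro t ht
    have ht' : t ∈ Icc (0:ℝ) 1 := by
      rcases Set.mem_uIoc.mp ht with h | h
      · exact ⟨le_trans hx₀.1 h.1.le, le_trans h.2 hx.2⟩
      · exact ⟨le_trans hx.1 h.1.le, le_trans h.2 hx₀.2⟩
    exact le_trans (hC₀ t ht') (le_max_left _ _)

lemma seq_left {φ v' : ℝ → ℝ} {x₀ C : ℝ} (hx₀ : x₀ ∈ Ioo (0:ℝ) 1)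
    (hC1 : 1 ≤ C) (hbd : ∀ x ∈ Icc (0:ℝ) 1, |φ x| ≤ C * |x - x₀|)
    (hv' : IntegrableOn v' (Icc 0 1)) :
    ∃ c : ℕ → ℝ, (∀ n, c n ∈ Ioo 0 x₀) ∧ Tendsto c atTop (𝓝 x₀) ∧
      Tendsto (fun n => φ (c n) * v' (c n)) atTop (𝓝 0) := by
  have key : ∀ η : ℝ, 0 < η → ∃ x, x ∈ Ioo (max 0 (x₀ - η)) x₀ ∧ |φ x * v' x| < η := by
    intro η hη
    by_contra hcon
    push_neg at hcon
    set l := max 0 (x₀ - η) with hl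
    have hlx : l < x₀ := max_lt hx₀.1 (by linarith)
    have hIoosub : Ioo l x₀ ⊆ Icc (0:ℝ) 1 := fun x hx =>
      ⟨le_trans (le_max_left _ _) hx.1.le, by linarith [hx.2, hx₀.2]⟩
    have hint : IntegrableOn (fun x => (x - x₀)⁻¹) (Ioo l x₀) := by
      apply Integrable.mono' (g := fun x => (C / η) * |v' x|)
      · exact ((hv'.mono hIoosub le_rfl).abs.const_mul _)
      · apply ContinuousOn.aestronglyMeasurable _ measurableSet_Ioo
        apply ContinuousOn.inv₀ ((continuous_id.sub continuous_const).continuousOn)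
        intro x hx
        exact sub_ne_zero.mpr hx.2.ne
      · refine ae_restrict_of_forall_mem measurableSet_Ioo fun x hx => ?_
        have hpos : 0 < x₀ - x := by linarith [hx.2]
        have h1 : η ≤ |φ x * v' x| := hcon x hx
        have h2 : |φ x * v' x| ≤ C * (x₀ - x) * |v' x| := by
          rw [abs_mul]
          apply mul_le_mul_of_nonneg_right _ (abs_nonneg _)
          have := hbd x (hIoosub hx)
          rwa [abs_sub_comm, abs_of_pos hpos] at this
        have h3 : η ≤ C * (x₀ - x) * |v' x| := le_trans h1 h2
        rw [Real.norm_eq_abs, abs_inv, abs_sub_comm, abs_of_pos hpos,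
          inv_le_iff_one_le_mul₀ hpos]
        have hCpos : (0:ℝ) < C := by linarith
        rw [div_mul_eq_mul_div, div_mul_eq_mul_div, le_div_iff₀ hη, one_mul]
        nlinarith [h3, hpos, abs_nonneg (v' x)]
    have : IntervalIntegrable (fun x => (x - x₀)⁻¹) volume l x₀ := by
      rw [intervalIntegrable_iff_integrableOn_Ioc_of_le hlx.le]
      exact hint.congr_set_ae Ioo_ae_eq_Ioc.symm
    rw [intervalIntegrable_sub_inv_iff] at this
    rcases this with h | h
    · exact hlx.ne h
    · exact h (right_mem_uIcc)
  choose! c hc1 hc2 using fun n : ℕ => key (1 / (n + 1)) (by positivity)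
  refine ⟨c, fun n => ?_, ?_, ?_⟩
  · exact ⟨lt_of_le_of_lt (le_max_left _ _) (hc1 n).1, (hc1 n).2⟩
  · apply tendsto_of_tendsto_of_tendsto_of_le_of_le
      (g := fun n : ℕ => x₀ - 1 / (n + 1)) (h := fun _ : ℕ => x₀)
    · have : Tendsto (fun n : ℕ => 1 / ((n : ℝ) + 1)) atTop (𝓝 0) :=
        tendsto_one_div_add_atTop_nhds_zero_nat
      have := tendsto_const_nhds (x := x₀) (f := atTop (α := ℕ)) |>.sub this
      simpa using this
    · exact tendsto_const_nhds
    · intro n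
      exact le_trans (le_max_right _ _) (hc1 n).1.le
    · intro n
      exact (hc1 n).2.le
  · exact squeeze_zero_norm (fun n => (hc2 n).le) tendsto_one_div_add_atTop_nhds_zero_nat

lemma seq_right {φ v' : ℝ → ℝ} {x₀ C : ℝ} (hx₀ : x₀ ∈ Ioo (0:ℝ) 1)
    (hC1 : 1 ≤ C) (hbd : ∀ x ∈ Icc (0:ℝ) 1, |φ x| ≤ C * |x - x₀|)
    (hv' : IntegrableOn v' (Icc 0 1)) :
    ∃ d : ℕ → ℝ, (∀ n, d n ∈ Ioo x₀ 1) ∧ Tendsto d atTop (𝓝 x₀) ∧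
      Tendsto (fun n => φ (d n) * v' (d n)) atTop (𝓝 0) := by
  have key : ∀ η : ℝ, 0 < η → ∃ x, x ∈ Ioo x₀ (min 1 (x₀ + η)) ∧ |φ x * v' x| < η := by
    intro η hη
    by_contra hcon
    push_neg at hcon
    set r := min 1 (x₀ + η) with hr
    have hxr : x₀ < r := lt_min hx₀.2 (by linarith)
    have hIoosub : Ioo x₀ r ⊆ Icc (0:ℝ) 1 := fun x hx =>
      ⟨by linarith [hx.1, hx₀.1], le_trans hx.2.le (min_le_left _ _)⟩
    have hint : IntegrableOn (fun x => (x - x₀)⁻¹) (Ioo x₀ r) := by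
      apply Integrable.mono' (g := fun x => (C / η) * |v' x|)
      · exact ((hv'.mono hIoosub le_rfl).abs.const_mul _)
      · apply ContinuousOn.aestronglyMeasurable _ measurableSet_Ioo
        apply ContinuousOn.inv₀ ((continuous_id.sub continuous_const).continuousOn)
        intro x hx
        exact sub_ne_zero.mpr hx.1.ne'
      · refine ae_restrict_of_forall_mem measurableSet_Ioo fun x hx => ?_
        have hpos : 0 < x - x₀ := by linarith [hx.1]
        have h1 : η ≤ |φ x * v' x| := hcon x hx
        have h2 : |φ x * v' x| ≤ C * (x - x₀) * |v' x| := by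
          rw [abs_mul]
          apply mul_le_mul_of_nonneg_right _ (abs_nonneg _)
          have := hbd x (hIoosub hx)
          rwa [abs_of_pos hpos] at this
        have h3 : η ≤ C * (x - x₀) * |v' x| := le_trans h1 h2
        rw [Real.norm_eq_abs, abs_inv, abs_of_pos hpos, inv_le_iff_one_le_mul₀ hpos]
        have hCpos : (0:ℝ) < C := by linarith
        rw [div_mul_eq_mul_div, div_mul_eq_mul_div, le_div_iff₀ hη, one_mul]
        nlinarith [h3, hpos, abs_nonneg (v' x)]
    have : IntervalIntegrable (fun x => (x - x₀)⁻¹) volume x₀ r := by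
      rw [intervalIntegrable_iff_integrableOn_Ioc_of_le hxr.le]
      exact hint.congr_set_ae Ioo_ae_eq_Ioc.symm
    rw [intervalIntegrable_sub_inv_iff] at this
    rcases this with h | h
    · exact hxr.ne h
    · exact h (left_mem_uIcc)
  choose! d hd1 hd2 using fun n : ℕ => key (1 / (n + 1)) (by positivity)
  refine ⟨d, fun n => ?_, ?_, ?_⟩
  · exact ⟨(hd1 n).1, lt_of_lt_of_le (hd1 n).2 (min_le_left _ _)⟩
  · apply tendsto_of_tendsto_of_tendsto_of_le_of_le
      (g := fun _ : ℕ => x₀) (h := fun n : ℕ => x₀ + 1 / (n + 1))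
    · exact tendsto_const_nhds
    · have : Tendsto (fun n : ℕ => 1 / ((n : ℝ) + 1)) atTop (𝓝 0) :=
        tendsto_one_div_add_atTop_nhds_zero_nat
      have := tendsto_const_nhds (x := x₀) (f := atTop (α := ℕ)) |>.add this
      simpa using this
    · intro n
      exact (hd1 n).1.le
    · intro n
      exact le_trans (hd1 n).2.le (min_le_right _ _)
  · exact squeeze_zero_norm (fun n => (hd2 n).le) tendsto_one_div_add_atTop_nhds_zero_nat

end Helpers

/-- Green's formula for the operator in divergence form in the strongly
degenerate case with interior degeneracy point `x₀ ∈ (0,1)`.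
Here `w₁ = (a u'')'` and `w₂ = (a u'')''`. -/
theorem statement10 (a : ℝ → ℝ) (x₀ : ℝ) (hx₀ : x₀ ∈ Set.Ioo (0:ℝ) 1)
    (ha : StronglyDeg a x₀)
    (u u' u'' w₁ w₂ v v' v'' : ℝ → ℝ)
    -- u ∈ H¹, u' locally absolutely continuous on [0,1] \ {x₀}, √a u'' ∈ L², a u'' ∈ H²
    (hu : ACOn 0 1 u u') (hu'' : LocACOn x₀ u' u'')
    (hsau : MeasureTheory.IntegrableOn (fun x => a x * (u'' x) ^ 2) (Set.Ioo 0 1))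
    (hau'' : ACOn 0 1 (fun x => a x * u'' x) w₁) (hw₁ : ACOn 0 1 w₁ w₂)
    (hw₂ : MeasureTheory.IntegrableOn (fun x => (w₂ x) ^ 2) (Set.Ioo 0 1))
    -- v ∈ H¹, v' locally absolutely continuous on [0,1] \ {x₀}, √a v'' ∈ L²
    (hv : ACOn 0 1 v v') (hv'' : LocACOn x₀ v' v'')
    (hsav : MeasureTheory.IntegrableOn (fun x => a x * (v'' x) ^ 2) (Set.Ioo 0 1)) :
    ∫ x in Set.Ioo (0:ℝ) 1, w₂ x * v x =
      w₁ 1 * v 1 - w₁ 0 * v 0 - a 1 * u'' 1 * v' 1 + a 0 * u'' 0 * v' 0 +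
        ∫ x in Set.Ioo (0:ℝ) 1, a x * u'' x * v'' x := by
  obtain ⟨hx₀0, hx₀1⟩ := hx₀
  have hx₀' : x₀ ∈ Ioo (0:ℝ) 1 := ⟨hx₀0, hx₀1⟩
  have hx₀I : x₀ ∈ Icc (0:ℝ) 1 := ⟨hx₀0.le, hx₀1.le⟩
  -- continuity of the H¹/H² pieces
  have hφcont : ContinuousOn (fun x => a x * u'' x) (Icc 0 1) := hau''.continuousOn'
  have hw₁cont : ContinuousOn w₁ (Icc 0 1) := hw₁.continuousOn'
  have hvcont : ContinuousOn v (Icc 0 1) := hv.continuousOn'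
  -- a u'' vanishes at the degeneracy point
  have hφ0 : a x₀ * u'' x₀ = 0 := phi_zero hx₀' ha hφcont hsau
  -- linear bound near x₀
  obtain ⟨C, hC1, hCb⟩ := phi_bound (φ := fun x => a x * u'' x) hx₀I hw₁cont hau''.2 hφ0
  -- integrability of the relevant products
  have hv'int : IntegrableOn v' (Icc 0 1) := hv.1
  have hw₂int : IntegrableOn w₂ (Icc 0 1) := hw₁.1
  obtain ⟨M, hM⟩ := isCompact_Icc.exists_bound_of_continuousOn hw₁cont
  have hw₁v' : IntegrableOn (fun x => w₁ x * v' x) (Icc 0 1) :=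
    Integrable.bdd_mul (c := M) hv'int
      (hw₁cont.aestronglyMeasurable measurableSet_Icc)
      (ae_restrict_of_forall_mem measurableSet_Icc hM)
  have hφv''Ioo : IntegrableOn (fun x => a x * u'' x * v'' x) (Ioo 0 1) := by
    apply Integrable.mono' (g := fun x => (a x * u'' x ^ 2 + a x * v'' x ^ 2) / 2)
    · exact (hsau.add hsav).div_const 2
    · exact ((hφcont.mono Ioo_subset_Icc_self).aestronglyMeasurable measurableSet_Ioo).mul
        (locACOn_aesm hx₀' hv'')
    · refine ae_restrict_of_forall_mem measurableSet_Ioo fun x hx => ?_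
      have ha0 : 0 ≤ a x := by
        by_cases hxx : x = x₀
        · rw [hxx, ha.2.2.1]
        · exact (ha.2.2.2.1 x (Ioo_subset_Icc_self hx) hxx).le
      rw [Real.norm_eq_abs, abs_le]
      constructor <;> nlinarith [mul_nonneg ha0 (sq_nonneg (u'' x + v'' x)),
        mul_nonneg ha0 (sq_nonneg (u'' x - v'' x))]
  have hφv'' : IntegrableOn (fun x => a x * u'' x * v'' x) (Icc 0 1) :=
    hφv''Ioo.congr_set_ae Ioo_ae_eq_Icc.symm
  -- sequences approaching x₀ on which the boundary terms vanish
  obtain ⟨c, hcmem, hctend, hcprod⟩ :=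
    seq_left (φ := fun x => a x * u'' x) hx₀' hC1 hCb hv'int
  obtain ⟨d, hdmem, hdtend, hdprod⟩ :=
    seq_right (φ := fun x => a x * u'' x) hx₀' hC1 hCb hv'int
  -- integration by parts on [0, c n]
  have hidL : ∀ n, (∫ x in Ioc 0 (c n), w₁ x * v' x) + (∫ x in Ioc 0 (c n), a x * u'' x * v'' x)
      = a (c n) * u'' (c n) * v' (c n) - a 0 * u'' 0 * v' 0 := by
    intro n
    have hmem := hcmem n
    have hsub : Icc 0 (c n) ⊆ Icc (0:ℝ) 1 :=
      Icc_subset_Icc le_rfl (by linarith [hmem.2])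
    have hvAC := hv'' 0 (c n) le_rfl (by linarith [hmem.2]) hmem.1.le
      (fun hc => absurd hc.2 (not_le.mpr hmem.2))
    exact ibp (F := fun x => a x * u'' x) (G := v') hmem.1.le
      ((hw₁cont.mono hsub).integrableOn_Icc) hvAC.1
      (fun x hx => hau''.2 x (hsub hx)) hvAC.2
  -- integration by parts on [d n, 1]
  have hidR : ∀ n, (∫ x in Ioc (d n) 1, w₁ x * v' x) + (∫ x in Ioc (d n) 1, a x * u'' x * v'' x)
      = a 1 * u'' 1 * v' 1 - a (d n) * u'' (d n) * v' (d n) := by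
    intro n
    have hmem := hdmem n
    have hsub : Icc (d n) 1 ⊆ Icc (0:ℝ) 1 :=
      Icc_subset_Icc (by linarith [hmem.1]) le_rfl
    have hvAC := hv'' (d n) 1 (by linarith [hmem.1]) le_rfl hmem.2.le
      (fun hc => absurd hc.1 (not_le.mpr hmem.1))
    apply ibp (F := fun x => a x * u'' x) (G := v') hmem.2.le
      ((hw₁cont.mono hsub).integrableOn_Icc) hvAC.1 ?_ hvAC.2
    intro x hx
    have hxI : x ∈ Icc (0:ℝ) 1 := hsub hx
    have hdI : d n ∈ Icc (0:ℝ) 1 := hsub (left_mem_Icc.mpr hmem.2.le)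
    have hxint : IntervalIntegrable w₁ volume 0 x := by
      apply ContinuousOn.intervalIntegrable
      apply hw₁cont.mono
      rw [uIcc_of_le hxI.1]
      exact Icc_subset_Icc le_rfl hxI.2
    have hdint : IntervalIntegrable w₁ volume 0 (d n) := by
      apply ContinuousOn.intervalIntegrable
      apply hw₁cont.mono
      rw [uIcc_of_le hdI.1]
      exact Icc_subset_Icc le_rfl hdI.2
    have h1 := hau''.2 x hxI
    have h2 := hau''.2 (d n) hdI
    have h3 := intervalIntegral.integral_interval_sub_left hxint hdint
    simp only at h1 h2
    show a x * u'' x = a (d n) * u'' (d n) + ∫ t in (d n)..x, w₁ t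
    rw [h1, h2, ← h3]
    ring
  -- splitting of integrals over Ioc 0 1
  have hsplit : ∀ h : ℝ → ℝ, IntegrableOn h (Icc 0 1) → ∀ y ∈ Icc (0:ℝ) 1,
      (∫ x in Ioc (0:ℝ) 1, h x) = (∫ x in Ioc 0 y, h x) + (∫ x in Ioc y 1, h x) := by
    intro h hint y hy
    rw [← Ioc_union_Ioc_eq_Ioc hy.1 hy.2,
      setIntegral_union (Ioc_disjoint_Ioc_of_le le_rfl) measurableSet_Ioc
        (hint.mono (Ioc_subset_Icc_self.trans (Icc_subset_Icc le_rfl hy.2)) le_rfl)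
        (hint.mono (Ioc_subset_Icc_self.trans (Icc_subset_Icc hy.1 le_rfl)) le_rfl)]
  -- continuity of primitives
  have contP1 : ContinuousOn (fun y => ∫ t in Ioc (0:ℝ) y, w₁ t * v' t) (Icc 0 1) :=
    intervalIntegral.continuousOn_primitive hw₁v'
  have contP2 : ContinuousOn (fun y => ∫ t in Ioc (0:ℝ) y, a t * u'' t * v'' t) (Icc 0 1) :=
    intervalIntegral.continuousOn_primitive hφv''
  have hctendW : Tendsto c atTop (𝓝[Icc (0:ℝ) 1] x₀) :=
    tendsto_nhdsWithin_of_tendsto_nhds_of_eventually_within _ hctend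
      (Eventually.of_forall fun n => ⟨(hcmem n).1.le, by linarith [(hcmem n).2]⟩)
  have hdtendW : Tendsto d atTop (𝓝[Icc (0:ℝ) 1] x₀) :=
    tendsto_nhdsWithin_of_tendsto_nhds_of_eventually_within _ hdtend
      (Eventually.of_forall fun n => ⟨by linarith [(hdmem n).1], (hdmem n).2.le⟩)
  have hlimc1 : Tendsto (fun n => ∫ t in Ioc (0:ℝ) (c n), w₁ t * v' t) atTop
      (𝓝 (∫ t in Ioc (0:ℝ) x₀, w₁ t * v' t)) := (contP1 x₀ hx₀I).tendsto.comp hctendW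
  have hlimc2 : Tendsto (fun n => ∫ t in Ioc (0:ℝ) (c n), a t * u'' t * v'' t) atTop
      (𝓝 (∫ t in Ioc (0:ℝ) x₀, a t * u'' t * v'' t)) := (contP2 x₀ hx₀I).tendsto.comp hctendW
  have hlimd1 : Tendsto (fun n => ∫ t in Ioc (0:ℝ) (d n), w₁ t * v' t) atTop
      (𝓝 (∫ t in Ioc (0:ℝ) x₀, w₁ t * v' t)) := (contP1 x₀ hx₀I).tendsto.comp hdtendW
  have hlimd2 : Tendsto (fun n => ∫ t in Ioc (0:ℝ) (d n), a t * u'' t * v'' t) atTop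
      (𝓝 (∫ t in Ioc (0:ℝ) x₀, a t * u'' t * v'' t)) := (contP2 x₀ hx₀I).tendsto.comp hdtendW
  -- left limit identity
  have hL : (∫ t in Ioc (0:ℝ) x₀, w₁ t * v' t) + (∫ t in Ioc (0:ℝ) x₀, a t * u'' t * v'' t)
      = 0 - a 0 * u'' 0 * v' 0 := by
    apply tendsto_nhds_unique (f := fun n =>
      (∫ x in Ioc (0:ℝ) (c n), w₁ x * v' x) + (∫ x in Ioc (0:ℝ) (c n), a x * u'' x * v'' x))
      (l := atTop) (hlimc1.add hlimc2)
    have heq : (fun n => (∫ x in Ioc (0:ℝ) (c n), w₁ x * v' x)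
        + (∫ x in Ioc (0:ℝ) (c n), a x * u'' x * v'' x))
        = fun n => a (c n) * u'' (c n) * v' (c n) - a 0 * u'' 0 * v' 0 := funext hidL
    rw [heq]
    exact hcprod.sub tendsto_const_nhds
  -- right limit identity
  have hR : ((∫ t in Ioc (0:ℝ) 1, w₁ t * v' t) - (∫ t in Ioc (0:ℝ) x₀, w₁ t * v' t))
      + ((∫ t in Ioc (0:ℝ) 1, a t * u'' t * v'' t)
        - (∫ t in Ioc (0:ℝ) x₀, a t * u'' t * v'' t))
      = a 1 * u'' 1 * v' 1 - 0 := by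
    apply tendsto_nhds_unique (f := fun n =>
      (∫ x in Ioc (d n) 1, w₁ x * v' x) + (∫ x in Ioc (d n) 1, a x * u'' x * v'' x))
      (l := atTop)
    · have heq : (fun n => (∫ x in Ioc (d n) 1, w₁ x * v' x)
          + (∫ x in Ioc (d n) 1, a x * u'' x * v'' x))
          = fun n => ((∫ t in Ioc (0:ℝ) 1, w₁ t * v' t)
            - (∫ t in Ioc (0:ℝ) (d n), w₁ t * v' t))
          + ((∫ t in Ioc (0:ℝ) 1, a t * u'' t * v'' t)
            - (∫ t in Ioc (0:ℝ) (d n), a t * u'' t * v'' t)) := by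
        funext n
        have hdI : d n ∈ Icc (0:ℝ) 1 := ⟨by linarith [(hdmem n).1], (hdmem n).2.le⟩
        rw [hsplit _ hw₁v' (d n) hdI, hsplit _ hφv'' (d n) hdI]
        ring
      rw [heq]
      exact (tendsto_const_nhds.sub hlimd1).add (tendsto_const_nhds.sub hlimd2)
    · have heq : (fun n => (∫ x in Ioc (d n) 1, w₁ x * v' x)
          + (∫ x in Ioc (d n) 1, a x * u'' x * v'' x))
          = fun n => a 1 * u'' 1 * v' 1 - a (d n) * u'' (d n) * v' (d n) := funext hidR
      rw [heq]
      exact tendsto_const_nhds.sub hdprod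
  -- global second integration by parts
  have hglob : (∫ x in Ioc (0:ℝ) 1, w₁ x * v' x) + (∫ x in Ioc (0:ℝ) 1, a x * u'' x * v'' x)
      = a 1 * u'' 1 * v' 1 - a 0 * u'' 0 * v' 0 := by linarith [hL, hR]
  -- first integration by parts on [0,1]
  have hibp1 : (∫ x in Ioc (0:ℝ) 1, w₂ x * v x) + (∫ x in Ioc (0:ℝ) 1, w₁ x * v' x)
      = w₁ 1 * v 1 - w₁ 0 * v 0 :=
    ibp (F := w₁) (G := v) (by norm_num) hw₂int hv'int hw₁.2 hv.2
  -- conclude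
  rw [show (∫ x in Ioo (0:ℝ) 1, w₂ x * v x) = ∫ x in Ioc (0:ℝ) 1, w₂ x * v x from
      (integral_Ioc_eq_integral_Ioo).symm,
    show (∫ x in Ioo (0:ℝ) 1, a x * u'' x * v'' x) = ∫ x in Ioc (0:ℝ) 1, a x * u'' x * v'' x from
      (integral_Ioc_eq_integral_Ioo).symm]
  linarith [hglob, hibp1]
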